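/- Let k be an integer with k ≥ 1 and m ∈ ℤ. Define ₁F₁(a; b; z) = Σ_{n=0}^∞ ((a)_n / (b)_n) zⁿ/n!, Ψ_{m,k}(θ,y) = e^{−i m θ/2} e^{−y²/2} y^k · ₁F₁( (1 + 2k − m)/4 ; k + 1/2 ; y² ), and for smooth F : ℝ² → ℂ define (E⁻ F)(θ,y) = −e^{iθ} ( ∂_y F(θ,y) + y F(θ,y) ). Then for all (θ,y) ∈ ℝ²: (E⁻ Ψ_{m,k})(θ,y) = −( (1 + 2k − m)(k−1) / ((2k−1)(2k+1)) ) · Ψ_{m−2,k+1}(θ,y) − k · Ψ_{m−2,k−1}(θ,y). -/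

import Mathlib

open Complex

/-- The confluent hypergeometric function
`₁F₁(a;b;z) = Σ_{n≥0} ((a)_n/(b)_n) zⁿ/n!` (Pochhammer rising factorials). -/
noncomputable def oneFone (a b z : ℂ) : ℂ :=
  ∑' n : ℕ, ((ascPochhammer ℂ n).eval a / (ascPochhammer ℂ n).eval b) * z ^ n
    / (n.factorial : ℂ)

/-- The weight-`m` `K`-finite vector
`Ψ_{m,k}(θ,y) = e^{-imθ/2} e^{-y²/2} y^k ₁F₁((1+2k-m)/4; k+1/2; y²)`. -/
noncomputable def Psi (m : ℤ) (k : ℕ) (θ y : ℝ) : ℂ :=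
  Complex.exp (-I * (m : ℂ) * (θ : ℂ) / 2) * Complex.exp (-(y : ℂ) ^ 2 / 2)
    * (y : ℂ) ^ k
    * oneFone ((1 + 2 * (k : ℂ) - (m : ℂ)) / 4) ((k : ℂ) + 1/2) ((y : ℂ) ^ 2)

/-- Partial derivative in the second variable `y`. -/
noncomputable def pderivY (F : ℝ → ℝ → ℂ) (θ y : ℝ) : ℂ := deriv (fun y' => F θ y') y

/-- The Heisenberg operator `(E⁻F)(θ,y) = -e^{iθ}(∂_yF + yF)`. -/
noncomputable def Eminus (F : ℝ → ℝ → ℂ) (θ y : ℝ) : ℂ :=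
  -Complex.exp (I * (θ : ℂ)) * (pderivY F θ y + (y : ℂ) * F θ y)

/- ### Auxiliary machinery -/

noncomputable def pc (a b : ℂ) (n : ℕ) : ℂ :=
  (ascPochhammer ℂ n).eval a / (ascPochhammer ℂ n).eval b / n.factorial

lemma poch_ne {b : ℂ} (hb : ∀ i : ℕ, b + i ≠ 0) (n : ℕ) :
    (ascPochhammer ℂ n).eval b ≠ 0 := by
  induction n with
  | zero => simp
  | succ n ih => rw [ascPochhammer_succ_eval]; exact mul_ne_zero ih (hb n)

lemma poch_left (x : ℂ) (n : ℕ) :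
    (ascPochhammer ℂ (n+1)).eval x = x * (ascPochhammer ℂ n).eval (x+1) := by
  rw [ascPochhammer_succ_left]
  simp [Polynomial.eval_comp]

noncomputable def core (a b : ℂ) (r : ℝ) (n : ℕ) : ℝ :=
  ((n : ℝ) + 1) * ‖(ascPochhammer ℂ n).eval a‖ * r ^ n
    / (‖(ascPochhammer ℂ n).eval b‖ * n.factorial)

lemma summable_core (a b : ℂ) (hb : ∀ i : ℕ, b + i ≠ 0) (r : ℝ) (hr : 0 ≤ r) :
    Summable (core a b r) := by
  obtain ⟨N, hN⟩ := exists_nat_ge (2 * ‖b‖ + ‖a‖ + 16 * r + 1)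
  apply summable_of_ratio_norm_eventually_le (r := 1/2) (by norm_num)
  filter_upwards [Filter.eventually_ge_atTop N] with n hn
  have hb0 : (0:ℝ) ≤ ‖b‖ := norm_nonneg _
  have ha0 : (0:ℝ) ≤ ‖a‖ := norm_nonneg _
  have hnN : (N : ℝ) ≤ (n : ℝ) := by exact_mod_cast hn
  have h2b : 2 * ‖b‖ ≤ (n : ℝ) := by linarith
  have han : ‖a‖ ≤ (n : ℝ) := by linarith
  have h16r : 16 * r ≤ (n : ℝ) := by linarith
  have hn1 : (1:ℝ) ≤ (n : ℝ) := by linarith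
  have hPb : (0:ℝ) < ‖(ascPochhammer ℂ n).eval b‖ :=
    norm_pos_iff.mpr (poch_ne hb n)
  have hPa : (0:ℝ) ≤ ‖(ascPochhammer ℂ n).eval a‖ := norm_nonneg _
  have hfn : (0:ℝ) < (n.factorial : ℝ) := by exact_mod_cast n.factorial_pos
  have hbn_lb : (n : ℝ) / 2 ≤ ‖b + n‖ := by
    have : (n:ℝ) - ‖b‖ ≤ ‖b + (n:ℂ)‖ := by
      have := norm_sub_norm_le ((n:ℂ)) (-(b))
      simp only [sub_neg_eq_add, norm_neg] at this
      calc (n:ℝ) - ‖b‖ ≤ ‖(n:ℂ)‖ - ‖b‖ := by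
            simp [Complex.norm_natCast]
        _ ≤ ‖(n:ℂ) + b‖ := by simpa using this
        _ = ‖b + (n:ℂ)‖ := by rw [add_comm]
    linarith
  have han_ub : ‖a + (n:ℂ)‖ ≤ 2 * (n : ℝ) := by
    calc ‖a + (n:ℂ)‖ ≤ ‖a‖ + ‖(n:ℂ)‖ := norm_add_le _ _
      _ = ‖a‖ + (n:ℝ) := by simp [Complex.norm_natCast]
      _ ≤ 2 * (n:ℝ) := by linarith
  have hbn0 : (0:ℝ) < ‖b + (n:ℂ)‖ := by linarith
  have hcore_nonneg : ∀ m : ℕ, 0 ≤ core a b r m := fun m => by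
    unfold core
    positivity
  rw [Real.norm_of_nonneg (hcore_nonneg _), Real.norm_of_nonneg (hcore_nonneg _)]
  unfold core
  rw [ascPochhammer_succ_eval, ascPochhammer_succ_eval, norm_mul, norm_mul,
    Nat.factorial_succ, pow_succ]
  push_cast
  rw [← mul_div_assoc]
  rw [div_le_div_iff₀ (by positivity) (by positivity)]
  set Pa := ‖(ascPochhammer ℂ n).eval a‖
  set Pb := ‖(ascPochhammer ℂ n).eval b‖
  set u := ‖a + (n:ℂ)‖
  set v := ‖b + (n:ℂ)‖
  have hrn : (0:ℝ) ≤ r ^ n := by positivity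
  have hu0 : (0:ℝ) ≤ u := norm_nonneg _
  have key : ((n:ℝ)+1+1)*(u*r) ≤ 1/2*(((n:ℝ)+1)*(v*((n:ℝ)+1))) := by
    have h1 : u * r ≤ 2*(n:ℝ) * r := mul_le_mul_of_nonneg_right han_ub hr
    have h2 : 2*(n:ℝ) * r ≤ 2*(n:ℝ) * ((n:ℝ)/16) := by
      apply mul_le_mul_of_nonneg_left _ (by linarith)
      linarith
    have h3 : ((n:ℝ)+2) * (u*r) ≤ ((n:ℝ)+2) * (2*(n:ℝ)*((n:ℝ)/16)) := by
      apply mul_le_mul_of_nonneg_left _ (by linarith)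
      linarith
    have h4 : 1/2*(((n:ℝ)+1)*(((n:ℝ)/2)*((n:ℝ)+1))) ≤ 1/2*(((n:ℝ)+1)*(v*((n:ℝ)+1))) := by
      have := mul_le_mul_of_nonneg_right hbn_lb (by linarith : (0:ℝ) ≤ (n:ℝ)+1)
      nlinarith
    nlinarith [h3, h4, sq_nonneg ((n:ℝ)-1), sq_nonneg ((n:ℝ)+1)]
  have c0 : (0:ℝ) ≤ Pa * Pb * (n.factorial:ℝ) * r^n := by positivity
  have final := mul_le_mul_of_nonneg_left key c0
  nlinarith [final]

lemma norm_pc (a : ℂ) {b : ℂ} (hb : ∀ i : ℕ, b + i ≠ 0) (n : ℕ) :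
    ‖pc a b n‖ = ‖(ascPochhammer ℂ n).eval a‖
      / (‖(ascPochhammer ℂ n).eval b‖ * n.factorial) := by
  unfold pc
  rw [norm_div, norm_div, div_div]
  norm_num [Complex.norm_natCast]

lemma core_ge (a : ℂ) {b : ℂ} (hb : ∀ i : ℕ, b + i ≠ 0) (r : ℝ) (n : ℕ)
    (j t C : ℝ) (hj0 : 0 ≤ j) (hj : j ≤ C * ((n:ℝ)+1)) (hC : 0 ≤ C)
    (ht0 : 0 ≤ t) (ht : t ≤ r ^ n) :
    j * (‖pc a b n‖ * t) ≤ C * core a b r n := by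
  rw [norm_pc a hb]
  unfold core
  have hPb : (0:ℝ) < ‖(ascPochhammer ℂ n).eval b‖ := norm_pos_iff.mpr (poch_ne hb n)
  have hPa : (0:ℝ) ≤ ‖(ascPochhammer ℂ n).eval a‖ := norm_nonneg _
  have hfn : (0:ℝ) < (n.factorial : ℝ) := by exact_mod_cast n.factorial_pos
  rw [show j * (‖(ascPochhammer ℂ n).eval a‖ / (‖(ascPochhammer ℂ n).eval b‖ * ↑n.factorial) * t)
      = (j * (‖(ascPochhammer ℂ n).eval a‖ * t)) / (‖(ascPochhammer ℂ n).eval b‖ * ↑n.factorial)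
      from by ring,
    show C * (((n:ℝ) + 1) * ‖(ascPochhammer ℂ n).eval a‖ * r ^ n
          / (‖(ascPochhammer ℂ n).eval b‖ * ↑n.factorial))
      = (C * (((n:ℝ)+1) * (‖(ascPochhammer ℂ n).eval a‖ * r ^ n)))
          / (‖(ascPochhammer ℂ n).eval b‖ * ↑n.factorial) from by ring]
  apply div_le_div_of_nonneg_right _ (by positivity)
  have hrn : (0:ℝ) ≤ r ^ n := le_trans ht0 ht
  have s1 : j * (‖(ascPochhammer ℂ n).eval a‖ * t)
      ≤ j * (‖(ascPochhammer ℂ n).eval a‖ * r ^ n) :=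
    mul_le_mul_of_nonneg_left (mul_le_mul_of_nonneg_left ht hPa) hj0
  have s2 : j * (‖(ascPochhammer ℂ n).eval a‖ * r ^ n)
      ≤ (C * ((n:ℝ)+1)) * (‖(ascPochhammer ℂ n).eval a‖ * r ^ n) :=
    mul_le_mul_of_nonneg_right hj (by positivity)
  calc j * (‖(ascPochhammer ℂ n).eval a‖ * t)
      ≤ (C * ((n:ℝ)+1)) * (‖(ascPochhammer ℂ n).eval a‖ * r ^ n) := le_trans s1 s2
    _ = C * (((n:ℝ)+1) * (‖(ascPochhammer ℂ n).eval a‖ * r ^ n)) := by ring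


lemma summable_S (a : ℂ) {b : ℂ} (hb : ∀ i : ℕ, b + i ≠ 0) (y : ℝ) :
    Summable (fun n : ℕ => pc a b n * (y:ℂ) ^ (2*n)) := by
  set r : ℝ := (max 1 |y|)^2 with hr
  have hr0 : (0:ℝ) ≤ r := by positivity
  apply Summable.of_norm_bounded ((summable_core a b hb r hr0).mul_left 1)
  intro n
  rw [norm_mul, norm_pow, Complex.norm_real]
  have ht : ‖y‖ ^ (2*n) ≤ r ^ n := by
    rw [hr, ← pow_mul]
    exact pow_le_pow_left₀ (norm_nonneg _) (le_max_right 1 _) _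
  calc ‖pc a b n‖ * ‖y‖ ^ (2*n) = 1 * (‖pc a b n‖ * ‖y‖^(2*n)) := by ring
    _ ≤ 1 * core a b r n :=
      core_ge a hb r n 1 (‖y‖^(2*n)) 1 one_pos.le
        (by have := Nat.cast_nonneg (α := ℝ) n; linarith) one_pos.le
        (by positivity) ht

lemma summable_D (a : ℂ) {b : ℂ} (hb : ∀ i : ℕ, b + i ≠ 0) (y R : ℝ) (hR : |y| ≤ R) :
    Summable (fun n : ℕ => pc a b n * ((2*n : ℕ) * (y:ℂ) ^ (2*n-1))) := by
  set r : ℝ := (max 1 R)^2 with hr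
  have hr0 : (0:ℝ) ≤ r := by positivity
  apply Summable.of_norm_bounded ((summable_core a b hb r hr0).mul_left 2)
  intro n
  rw [norm_mul, norm_mul, norm_pow, Complex.norm_real, Complex.norm_natCast]
  have hyR : ‖y‖ ≤ max 1 R := le_trans hR (le_max_right 1 R)
  have ht : ‖y‖ ^ (2*n-1) ≤ r ^ n := by
    rw [hr, ← pow_mul]
    calc ‖y‖ ^ (2*n-1) ≤ (max 1 R) ^ (2*n-1) :=
          pow_le_pow_left₀ (norm_nonneg _) hyR _
      _ ≤ (max 1 R) ^ (2*n) := pow_le_pow_right₀ (le_max_left 1 R) (by omega)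
  calc ‖pc a b n‖ * ((2*n : ℕ) * ‖y‖ ^ (2*n-1))
      = (2*(n:ℝ)) * (‖pc a b n‖ * ‖y‖^(2*n-1)) := by push_cast; ring
    _ ≤ 2 * core a b r n :=
      core_ge a hb r n (2*(n:ℝ)) (‖y‖^(2*n-1)) 2 (by positivity) (by push_cast; linarith)
        (by norm_num) (by positivity) ht

lemma hasDerivAt_S (a : ℂ) {b : ℂ} (hb : ∀ i : ℕ, b + i ≠ 0) (y : ℝ) :
    HasDerivAt (fun y' : ℝ => ∑' n : ℕ, pc a b n * (y':ℂ) ^ (2*n))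
      (∑' n : ℕ, pc a b n * ((2*n : ℕ) * (y:ℂ) ^ (2*n-1))) y := by
  set R : ℝ := |y| + 1 with hRdef
  set r : ℝ := (max 1 R)^2 with hr
  have hr0 : (0:ℝ) ≤ r := by positivity
  have hmem : y ∈ Metric.ball (0:ℝ) R := by
    rw [Metric.mem_ball, Real.dist_eq, sub_zero, hRdef]
    linarith [abs_nonneg y]
  refine hasDerivAt_tsum_of_isPreconnected
    (u := fun n => 2 * core a b r n) (t := Metric.ball (0:ℝ) R) (y₀ := y)
    (g' := fun n y' => pc a b n * ((2*n : ℕ) * ((y':ℝ):ℂ) ^ (2*n-1)))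
    ((summable_core a b hb r hr0).mul_left 2) Metric.isOpen_ball
    ((convex_ball (0:ℝ) R).isPreconnected)
    (fun n y' _ => ((hasDerivAt_pow (2*n) ((y':ℝ):ℂ)).comp_ofReal).const_mul (pc a b n))
    ?_ hmem (summable_S a hb y) hmem
  intro n y' hy'
  rw [Metric.mem_ball, Real.dist_eq, sub_zero] at hy'
  have hyR : ‖y'‖ ≤ max 1 R := le_trans hy'.le (le_max_right 1 R)
  rw [norm_mul, norm_mul, norm_pow, Complex.norm_real, Complex.norm_natCast]
  have ht : ‖y'‖ ^ (2*n-1) ≤ r ^ n := by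
    rw [hr, ← pow_mul]
    calc ‖y'‖ ^ (2*n-1) ≤ (max 1 R) ^ (2*n-1) :=
          pow_le_pow_left₀ (norm_nonneg _) hyR _
      _ ≤ (max 1 R) ^ (2*n) := pow_le_pow_right₀ (le_max_left 1 R) (by omega)
  calc ‖pc a b n‖ * ((2*n : ℕ) * ‖y'‖ ^ (2*n-1))
      = (2*(n:ℝ)) * (‖pc a b n‖ * ‖y'‖^(2*n-1)) := by push_cast; ring
    _ ≤ 2 * core a b r n :=
      core_ge a hb r n (2*(n:ℝ)) (‖y'‖^(2*n-1)) 2 (by positivity) (by push_cast; linarith)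
        (by norm_num) (by positivity) ht

lemma coeff_id (k n : ℕ) (hk : 1 ≤ k) (a : ℂ) :
    ((k:ℂ) + 2*((n:ℂ)+1)) * pc a ((k:ℂ)+1/2) (n+1)
      = (4*a) * ((k:ℂ)-1) / ((2*(k:ℂ)-1)*(2*(k:ℂ)+1)) * pc (a+1) ((k:ℂ)+1/2+1) n
        + (k:ℂ) * pc a ((k:ℂ)+1/2-1) (n+1) := by
  have hk1 : (1:ℝ) ≤ (k:ℝ) := by exact_mod_cast hk
  have cast_ne : ∀ x : ℝ, 0 < x → (x:ℂ) ≠ 0 := fun x hx => by exact_mod_cast hx.ne'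
  have hb0 : ((k:ℂ)+1/2) ≠ 0 := by
    rw [show (k:ℂ)+1/2 = (((k:ℝ)+1/2 : ℝ) : ℂ) by push_cast; ring]
    exact cast_ne _ (by positivity)
  have hbm1 : ((k:ℂ)+1/2-1) ≠ 0 := by
    rw [show (k:ℂ)+1/2-1 = (((k:ℝ)-1/2 : ℝ) : ℂ) by push_cast; ring]
    exact cast_ne _ (by linarith)
  have hbn : ((k:ℂ)+1/2+(n:ℂ)) ≠ 0 := by
    rw [show (k:ℂ)+1/2+(n:ℂ) = (((k:ℝ)+1/2+(n:ℝ) : ℝ) : ℂ) by push_cast; ring]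
    exact cast_ne _ (by positivity)
  have h2km1 : (2*(k:ℂ)-1) ≠ 0 := by
    rw [show 2*(k:ℂ)-1 = ((2*(k:ℝ)-1 : ℝ) : ℂ) by push_cast; ring]
    exact cast_ne _ (by linarith)
  have h2kp1 : (2*(k:ℂ)+1) ≠ 0 := by
    rw [show 2*(k:ℂ)+1 = ((2*(k:ℝ)+1 : ℝ) : ℂ) by push_cast; ring]
    exact cast_ne _ (by positivity)
  have hbB : ∀ i : ℕ, ((k:ℂ)+1/2+1) + i ≠ 0 := fun i => by
    rw [show (k:ℂ)+1/2+1+(i:ℂ) = (((k:ℝ)+1/2+1+(i:ℝ) : ℝ) : ℂ) by push_cast; ring]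
    exact cast_ne _ (by positivity)
  have hbb : ∀ i : ℕ, ((k:ℂ)+1/2) + i ≠ 0 := fun i => by
    rw [show (k:ℂ)+1/2+(i:ℂ) = (((k:ℝ)+1/2+(i:ℝ) : ℝ) : ℂ) by push_cast; ring]
    exact cast_ne _ (by positivity)
  have hB1 : (ascPochhammer ℂ n).eval ((k:ℂ)+1/2+1) ≠ 0 := poch_ne hbB n
  have hBn : (ascPochhammer ℂ n).eval ((k:ℂ)+1/2) ≠ 0 := poch_ne hbb n
  have hfac : ((n.factorial : ℂ)) ≠ 0 := by exact_mod_cast n.factorial_ne_zero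
  have hfac1 : (((n+1).factorial : ℂ)) ≠ 0 := by exact_mod_cast (n+1).factorial_ne_zero
  have hn1 : ((n:ℂ)+1) ≠ 0 := by
    rw [show (n:ℂ)+1 = (((n:ℝ)+1 : ℝ) : ℂ) by push_cast; ring]
    exact cast_ne _ (by positivity)
  unfold pc
  have h1 : (ascPochhammer ℂ n).eval ((k:ℂ)+1/2) * ((k:ℂ)+1/2+(n:ℂ))
      = ((k:ℂ)+1/2) * (ascPochhammer ℂ n).eval ((k:ℂ)+1/2+1) := by
    rw [← ascPochhammer_succ_eval, poch_left]
  rw [poch_left a n, poch_left ((k:ℂ)+1/2) n, poch_left ((k:ℂ)+1/2-1) n,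
    show (k:ℂ)+1/2-1+1 = (k:ℂ)+1/2 by ring, Nat.factorial_succ]
  generalize hA : (ascPochhammer ℂ n).eval (a+1) = A1
  generalize hE : (ascPochhammer ℂ n).eval ((k:ℂ)+1/2+1) = E1 at h1
  generalize hE0 : (ascPochhammer ℂ n).eval ((k:ℂ)+1/2) = E0 at h1
  rw [hE] at hB1
  rw [hE0] at hBn
  push_cast
  rw [div_div, div_div, div_div, ← mul_div_assoc, ← mul_div_assoc, ← mul_div_assoc,
    div_mul_eq_mul_div, div_div,
    div_add_div _ _ (mul_ne_zero (mul_ne_zero h2km1 h2kp1) (mul_ne_zero hB1 hfac))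
      (mul_ne_zero (mul_ne_zero hbm1 hBn) (mul_ne_zero hn1 hfac)),
    div_eq_div_iff (mul_ne_zero (mul_ne_zero hb0 hB1) (mul_ne_zero hn1 hfac))
      (mul_ne_zero (mul_ne_zero (mul_ne_zero h2km1 h2kp1) (mul_ne_zero hB1 hfac))
        (mul_ne_zero (mul_ne_zero hbm1 hBn) (mul_ne_zero hn1 hfac)))]
  linear_combination ((k:ℂ)*a*A1*(2*(k:ℂ)-1)*(2*(k:ℂ)+1)*E1*((n:ℂ)+1)*((n.factorial:ℂ))^2) * h1

lemma pc_zero (a b : ℂ) : pc a b 0 = 1 := by unfold pc; simp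

lemma key_identity (k : ℕ) (hk : 1 ≤ k) (a : ℂ) (y : ℝ)
    (hb : ∀ i : ℕ, ((k:ℂ)+1/2) + i ≠ 0)
    (hb1 : ∀ i : ℕ, ((k:ℂ)+1/2+1) + i ≠ 0)
    (hbm : ∀ i : ℕ, ((k:ℂ)+1/2-1) + i ≠ 0) :
    (k:ℂ) * (y:ℂ)^(k-1) * (∑' n : ℕ, pc a ((k:ℂ)+1/2) n * (y:ℂ)^(2*n))
      + (y:ℂ)^k * (∑' n : ℕ, pc a ((k:ℂ)+1/2) n * ((2*n : ℕ) * (y:ℂ)^(2*n-1)))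
    = (4*a)*((k:ℂ)-1)/((2*(k:ℂ)-1)*(2*(k:ℂ)+1)) * (y:ℂ)^(k+1)
        * (∑' n : ℕ, pc (a+1) ((k:ℂ)+1/2+1) n * (y:ℂ)^(2*n))
      + (k:ℂ) * (y:ℂ)^(k-1) * (∑' n : ℕ, pc a ((k:ℂ)+1/2-1) n * (y:ℂ)^(2*n)) := by
  set Y : ℂ := (y:ℂ) with hY
  set C : ℂ := (4*a)*((k:ℂ)-1)/((2*(k:ℂ)-1)*(2*(k:ℂ)+1)) with hC
  have hS : Summable (fun n : ℕ => pc a ((k:ℂ)+1/2) n * Y^(2*n)) := summable_S a hb y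
  have hD : Summable (fun n : ℕ => pc a ((k:ℂ)+1/2) n * ((2*n : ℕ) * Y^(2*n-1))) :=
    summable_D a hb y |y| le_rfl
  have hS1 : Summable (fun n : ℕ => pc (a+1) ((k:ℂ)+1/2+1) n * Y^(2*n)) :=
    summable_S (a+1) hb1 y
  have hS2 : Summable (fun n : ℕ => pc a ((k:ℂ)+1/2-1) n * Y^(2*n)) :=
    summable_S a hbm y
  -- combine into single tsums
  rw [← tsum_mul_left (a := (k:ℂ) * Y^(k-1)), ← tsum_mul_left (a := Y^k),
    ← tsum_mul_left (a := C * Y^(k+1)), ← tsum_mul_left (a := (k:ℂ) * Y^(k-1))]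
  rw [← Summable.tsum_add (hS.mul_left _) (hD.mul_left _)]
  -- move the S2 term to the left
  have main : ∑' n : ℕ, ((k:ℂ) * Y^(k-1) * (pc a ((k:ℂ)+1/2) n * Y^(2*n))
        + Y^k * (pc a ((k:ℂ)+1/2) n * ((2*n : ℕ) * Y^(2*n-1)))
        - (k:ℂ) * Y^(k-1) * (pc a ((k:ℂ)+1/2-1) n * Y^(2*n)))
      = ∑' n : ℕ, C * Y^(k+1) * (pc (a+1) ((k:ℂ)+1/2+1) n * Y^(2*n)) := by
    have hG : Summable (fun n : ℕ => (k:ℂ) * Y^(k-1) * (pc a ((k:ℂ)+1/2) n * Y^(2*n))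
        + Y^k * (pc a ((k:ℂ)+1/2) n * ((2*n : ℕ) * Y^(2*n-1)))
        - (k:ℂ) * Y^(k-1) * (pc a ((k:ℂ)+1/2-1) n * Y^(2*n))) :=
      ((hS.mul_left _).add (hD.mul_left _)).sub (hS2.mul_left _)
    rw [Summable.tsum_eq_zero_add hG]
    have h0 : (k:ℂ) * Y^(k-1) * (pc a ((k:ℂ)+1/2) 0 * Y^(2*0))
        + Y^k * (pc a ((k:ℂ)+1/2) 0 * ((2*0 : ℕ) * Y^(2*0-1)))
        - (k:ℂ) * Y^(k-1) * (pc a ((k:ℂ)+1/2-1) 0 * Y^(2*0)) = 0 := by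
      rw [pc_zero, pc_zero]
      simp
    rw [h0, zero_add]
    apply tsum_congr
    intro n
    have hcid := coeff_id k n hk a
    have hy1 : Y^(2*(n+1)) = Y^(2*n) * Y^2 := by rw [← pow_add]; congr 1
    have hy2 : Y^(2*(n+1)-1) = Y^(2*n) * Y := by rw [← pow_succ]; congr 1
    have hy3 : Y^k = Y^(k-1) * Y := by rw [← pow_succ]; congr 1; omega
    have hy4 : Y^(k+1) = Y^(k-1) * Y^2 := by rw [← pow_add]; congr 1; omega
    rw [hy1, hy2, hy3, hy4]
    push_cast
    linear_combination (Y^(k-1) * Y^(2*n) * Y^2) * hcid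
  have hL := Summable.tsum_sub ((hS.mul_left ((k:ℂ) * Y^(k-1))).add
      (hD.mul_left (Y^k))) (hS2.mul_left ((k:ℂ) * Y^(k-1)))
  linear_combination main - hL


lemma oneFone_sq (a b : ℂ) (y : ℝ) :
    oneFone a b ((y:ℂ)^2) = ∑' n : ℕ, pc a b n * (y:ℂ)^(2*n) := by
  unfold oneFone
  exact tsum_congr fun n => by unfold pc; rw [pow_mul]; ring

lemma Psi_eq (m : ℤ) (k : ℕ) (θ y : ℝ) :
    Psi m k θ y = Complex.exp (-I*(m:ℂ)*(θ:ℂ)/2) * Complex.exp (-(y:ℂ)^2/2) * (y:ℂ)^k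
      * ∑' n : ℕ, pc ((1+2*(k:ℂ)-(m:ℂ))/4) ((k:ℂ)+1/2) n * (y:ℂ)^(2*n) := by
  unfold Psi
  rw [oneFone_sq]

theorem Eminus_action (k : ℕ) (hk : 1 ≤ k) (m : ℤ) :
    ∀ θ y : ℝ,
      Eminus (Psi m k) θ y
        = -((1 + 2 * (k : ℂ) - (m : ℂ)) * ((k : ℂ) - 1)
              / ((2 * (k : ℂ) - 1) * (2 * (k : ℂ) + 1))) * Psi (m - 2) (k + 1) θ y
          - (k : ℂ) * Psi (m - 2) (k - 1) θ y := by
  intro θ y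
  have hk1 : (1:ℝ) ≤ (k:ℝ) := by exact_mod_cast hk
  have cast_ne : ∀ x : ℝ, 0 < x → (x:ℂ) ≠ 0 := fun x hx => by exact_mod_cast hx.ne'
  set A : ℂ := (1 + 2*(k:ℂ) - (m:ℂ))/4 with hA
  have hb : ∀ i : ℕ, ((k:ℂ)+1/2) + i ≠ 0 := fun i => by
    rw [show (k:ℂ)+1/2+(i:ℂ) = (((k:ℝ)+1/2+(i:ℝ) : ℝ) : ℂ) by push_cast; ring]
    exact cast_ne _ (by positivity)
  have hb1 : ∀ i : ℕ, ((k:ℂ)+1/2+1) + i ≠ 0 := fun i => by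
    rw [show (k:ℂ)+1/2+1+(i:ℂ) = (((k:ℝ)+1/2+1+(i:ℝ) : ℝ) : ℂ) by push_cast; ring]
    exact cast_ne _ (by positivity)
  have hbm : ∀ i : ℕ, ((k:ℂ)+1/2-1) + i ≠ 0 := fun i => by
    rw [show (k:ℂ)+1/2-1+(i:ℂ) = (((k:ℝ)-1/2+(i:ℝ) : ℝ) : ℂ) by push_cast; ring]
    exact cast_ne _ (by have := Nat.cast_nonneg (α := ℝ) i; linarith)
  -- derivative of Psi in y
  have h1 : HasDerivAt (fun y' : ℝ => Complex.exp (-((y':ℝ):ℂ)^2/2))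
      (-(y:ℂ) * Complex.exp (-(y:ℂ)^2/2)) y := by
    have hz : HasDerivAt (fun z : ℂ => Complex.exp (-z^2/2)) _ (y:ℂ) :=
      (((hasDerivAt_pow 2 ((y:ℂ))).neg).div_const 2).cexp
    convert hz.comp_ofReal using 1
    simp only [Pi.neg_apply]
    push_cast
    ring
  have h2 : HasDerivAt (fun y' : ℝ => ((y':ℝ):ℂ)^k) ((k:ℂ) * (y:ℂ)^(k-1)) y :=
    (hasDerivAt_pow k ((y:ℂ))).comp_ofReal
  have h3 := hasDerivAt_S A hb y
  have hprod := ((h1.mul h2).mul h3).const_mul (Complex.exp (-I*(m:ℂ)*(θ:ℂ)/2))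
  have hfun : (fun y' : ℝ => Psi m k θ y')
      = fun y' : ℝ => Complex.exp (-I*(m:ℂ)*(θ:ℂ)/2) *
          ((Complex.exp (-((y':ℝ):ℂ)^2/2) * ((y':ℝ):ℂ)^k)
            * ∑' n : ℕ, pc A ((k:ℂ)+1/2) n * ((y':ℝ):ℂ)^(2*n)) :=
    funext fun y' => by rw [Psi_eq]; ring
  have hD : pderivY (Psi m k) θ y
      = Complex.exp (-I*(m:ℂ)*(θ:ℂ)/2) *
          ((((-(y:ℂ) * Complex.exp (-(y:ℂ)^2/2)) * (y:ℂ)^k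
              + Complex.exp (-(y:ℂ)^2/2) * ((k:ℂ) * (y:ℂ)^(k-1)))
            * ∑' n : ℕ, pc A ((k:ℂ)+1/2) n * (y:ℂ)^(2*n))
           + (Complex.exp (-(y:ℂ)^2/2) * (y:ℂ)^k)
            * ∑' n : ℕ, pc A ((k:ℂ)+1/2) n * ((2*n : ℕ) * (y:ℂ)^(2*n-1))) := by
    rw [pderivY, hfun]
    exact hprod.deriv
  have cexp2 : Complex.exp (-I*((m:ℂ)-2)*(θ:ℂ)/2)
      = Complex.exp (I*(θ:ℂ)) * Complex.exp (-I*(m:ℂ)*(θ:ℂ)/2) := by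
    rw [← Complex.exp_add]
    congr 1
    ring
  have c1 : (((m-2 : ℤ)):ℂ) = (m:ℂ) - 2 := by push_cast; ring
  have c2 : (((k+1 : ℕ)):ℂ) = (k:ℂ) + 1 := by push_cast; ring
  have c3 : (((k-1 : ℕ)):ℂ) = (k:ℂ) - 1 := by
    rw [Nat.cast_sub hk]
    norm_num
  have P1 : Psi (m-2) (k+1) θ y
      = Complex.exp (I*(θ:ℂ)) * Complex.exp (-I*(m:ℂ)*(θ:ℂ)/2) * Complex.exp (-(y:ℂ)^2/2)
          * (y:ℂ)^(k+1) * ∑' n : ℕ, pc (A+1) ((k:ℂ)+1/2+1) n * (y:ℂ)^(2*n) := by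
    rw [Psi_eq, c1, c2,
      show (1+2*((k:ℂ)+1)-((m:ℂ)-2))/4 = A + 1 by rw [hA]; ring,
      show (k:ℂ)+1+1/2 = (k:ℂ)+1/2+1 by ring, cexp2]
  have P2 : Psi (m-2) (k-1) θ y
      = Complex.exp (I*(θ:ℂ)) * Complex.exp (-I*(m:ℂ)*(θ:ℂ)/2) * Complex.exp (-(y:ℂ)^2/2)
          * (y:ℂ)^(k-1) * ∑' n : ℕ, pc A ((k:ℂ)+1/2-1) n * (y:ℂ)^(2*n) := by
    rw [Psi_eq, c1, c3,
      show (1+2*((k:ℂ)-1)-((m:ℂ)-2))/4 = A by rw [hA]; ring,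
      show (k:ℂ)-1+1/2 = (k:ℂ)+1/2-1 by ring, cexp2]
  have key := key_identity k hk A y hb hb1 hbm
  rw [Eminus, hD, Psi_eq m k θ y, P1, P2, ← hA]
  linear_combination (-(Complex.exp (I*(θ:ℂ)) * Complex.exp (-I*(m:ℂ)*(θ:ℂ)/2)
    * Complex.exp (-(y:ℂ)^2/2))) * key
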